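/- Hall-type feasibility for the one-day car rental problem: requests R_d on day d with demands n_i and allowed brand sets j_i ⊆ B can all be satisfied from supplies m_b iff for every subset S of requests, ∑_{i∈S} n_i ≤ ∑_{b ∈ ⋃_{i∈S} j_i} m_b. -/
import Mathlib


/-- Hall-type feasibility for the one-day car rental problem: all requests
can be satisfied iff the deficiency condition holds for every subset of
requests. -/
theorem car_rental_hall (R B : Type*) [Fintype R] [Fintype B]
    [DecidableEq B]
    (n : R → ℕ) (m : B → ℕ) (j : R → Finset B) :
    (∃ x : R → B → ℕ,
      (∀ i, n i ≤ ∑ b, x i b) ∧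
      (∀ i b, b ∉ j i → x i b = 0) ∧
      (∀ b, ∑ i, x i b ≤ m b)) ↔
    (∀ S : Finset R, ∑ i ∈ S, n i ≤ ∑ b ∈ S.biUnion j, m b) := by
  classical
  constructor
  · rintro ⟨x, hx1, hx2, hx3⟩ S
    calc ∑ i ∈ S, n i ≤ ∑ i ∈ S, ∑ b ∈ S.biUnion j, x i b := by
          refine Finset.sum_le_sum fun i hi => ?_
          calc n i ≤ ∑ b, x i b := hx1 i
            _ = ∑ b ∈ j i, x i b := (Finset.sum_subset (Finset.subset_univ _)
                  (fun b _ hb => hx2 i b hb)).symm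
            _ ≤ ∑ b ∈ S.biUnion j, x i b := Finset.sum_le_sum_of_subset
                  (Finset.subset_biUnion_of_mem j hi)
      _ = ∑ b ∈ S.biUnion j, ∑ i ∈ S, x i b := Finset.sum_comm
      _ ≤ ∑ b ∈ S.biUnion j, m b := Finset.sum_le_sum fun b _ =>
          le_trans (Finset.sum_le_sum_of_subset (Finset.subset_univ S)) (hx3 b)
  · intro hS
    set t : (Σ i : R, Fin (n i)) → Finset (Σ b : B, Fin (m b)) :=
      fun a => (j a.1).sigma (fun b => Finset.univ) with ht
    have hall : ∀ s : Finset (Σ i : R, Fin (n i)), s.card ≤ (s.biUnion t).card := by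
      intro s
      have h1 : s.card ≤ ∑ i ∈ s.image Sigma.fst, n i := by
        calc s.card ≤ ((s.image Sigma.fst).sigma
              fun i => (Finset.univ : Finset (Fin (n i)))).card := by
              apply Finset.card_le_card
              intro a ha
              simp only [Finset.mem_sigma, Finset.mem_univ, and_true]
              exact Finset.mem_image_of_mem _ ha
          _ = ∑ i ∈ s.image Sigma.fst, n i := by
              simp [Finset.card_sigma]
      have h2 : s.biUnion t = ((s.image Sigma.fst).biUnion j).sigma
          (fun b => (Finset.univ : Finset (Fin (m b)))) := by
        ext a'
        simp only [Finset.mem_biUnion, Finset.mem_sigma, Finset.mem_univ, and_true,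
          Finset.mem_image, ht, Finset.mem_sigma]
        constructor
        · rintro ⟨a, ha, h⟩
          exact ⟨a.1, ⟨a, ha, rfl⟩, h⟩
        · rintro ⟨i, ⟨a, ha, rfl⟩, h⟩
          exact ⟨a, ha, h⟩
      rw [h2]
      calc s.card ≤ ∑ i ∈ s.image Sigma.fst, n i := h1
        _ ≤ ∑ b ∈ (s.image Sigma.fst).biUnion j, m b := hS _
        _ = _ := by simp [Finset.card_sigma]
    obtain ⟨f, hfinj, hf⟩ := (Finset.all_card_le_biUnion_card_iff_exists_injective t).mp hall
    refine ⟨fun i b => (Finset.univ.filter fun c : Fin (n i) => (f ⟨i, c⟩).1 = b).card,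
      ?_, ?_, ?_⟩
    · intro i
      rw [← Finset.card_eq_sum_card_fiberwise (f := fun c : Fin (n i) => (f ⟨i, c⟩).1)
        (fun c _ => Finset.mem_univ _)]
      simp
    · intro i b hb
      rw [Finset.card_eq_zero, Finset.filter_eq_empty_iff]
      intro c _ hc
      have := hf ⟨i, c⟩
      simp only [ht, Finset.mem_sigma, Finset.mem_univ, and_true] at this
      rw [hc] at this
      exact hb this
    · intro b
      have key : ∑ i, (Finset.univ.filter fun c : Fin (n i) => (f ⟨i, c⟩).1 = b).card
          = (Finset.univ.filter fun a : Σ i : R, Fin (n i) => (f a).1 = b).card := by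
        simp only [Finset.card_filter]
        rw [← Finset.univ_sigma_univ, Finset.sum_sigma]
      rw [key]
      have : ((Finset.univ.filter fun a : Σ i : R, Fin (n i) => (f a).1 = b).image f).card
          ≤ (Finset.univ.filter fun a' : Σ b' : B, Fin (m b') => a'.1 = b).card := by
        apply Finset.card_le_card
        intro a' ha'
        simp only [Finset.mem_image, Finset.mem_filter, Finset.mem_univ, true_and] at ha' ⊢
        obtain ⟨a, ha, rfl⟩ := ha'
        exact ha
      rw [Finset.card_image_of_injective _ hfinj] at this
      calc (Finset.univ.filter fun a : Σ i : R, Fin (n i) => (f a).1 = b).card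
          ≤ (Finset.univ.filter fun a' : Σ b' : B, Fin (m b') => a'.1 = b).card := this
        _ = m b := by
            have heq : (Finset.univ.filter fun a' : Σ b' : B, Fin (m b') => a'.1 = b)
                = ({b} : Finset B).sigma fun b' => (Finset.univ : Finset (Fin (m b'))) := by
              ext a'
              simp [Finset.mem_sigma]
            rw [heq, Finset.card_sigma]
            simp
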